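/- arXiv:2403.13449 — 2 statements merged into one kernel-verified Lean document; each statement's English description precedes it below -/
import Mathlib

section
/- A shift space X ⊆ A^ℤ admits a finite string attractor if and only if X is a finite union of orbits of purely periodic words, i.e., a finite union of sets of the form {S^k(x) : k ∈ ℤ} with x purely periodic. In particular, such an X is finite. -/
open scoped ENat Classical

/-- The length-`n` factor of the bi-infinite word `x` starting at position `i`. -/
def subwordZ {A : Type*} (x : ℤ → A) (i : ℤ) (n : ℕ) : List A :=
  (List.range n).map fun j => x (i + (j : ℤ))

/-- `w` occurs in `x` at position `i`. -/
def occursAt {A : Type*} (x : ℤ → A) (w : List A) (i : ℤ) : Prop :=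
  subwordZ x i w.length = w

/-- `w` is a factor of the bi-infinite word `x`. -/
def IsFactorZ {A : Type*} (x : ℤ → A) (w : List A) : Prop :=
  ∃ i : ℤ, occursAt x w i

/-- `Γ` is a string attractor of the bi-infinite word `x`: every nonempty factor
has an occurrence crossing a position of `Γ`. -/
def IsAttractorZ {A : Type*} (x : ℤ → A) (Γ : Set ℤ) : Prop :=
  ∀ w : List A, w ≠ [] → IsFactorZ x w →
    ∃ i : ℤ, occursAt x w i ∧ ∃ p ∈ Γ, i ≤ p ∧ p < i + (w.length : ℤ)

/-- The span `sup Γ - inf Γ` of a set of integers (`⊤` when unbounded). -/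
noncomputable def setSpan (Γ : Set ℤ) : ℕ∞ :=
  ⨆ a ∈ Γ, ⨆ b ∈ Γ, ((b - a).toNat : ℕ∞)

/-- The string attractor span of a bi-infinite word. -/
noncomputable def wordSpan {A : Type*} (x : ℤ → A) : ℕ∞ :=
  ⨅ Γ ∈ {Γ : Set ℤ | IsAttractorZ x Γ}, setSpan Γ

/-- The factor complexity of a bi-infinite word. -/
noncomputable def complexityZ {A : Type*} (x : ℤ → A) (n : ℕ) : ℕ :=
  Nat.card {w : List A // w.length = n ∧ IsFactorZ x w}

/-- The shift `S^k`. -/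
def shiftZ {A : Type*} (k : ℤ) (x : ℤ → A) : ℤ → A := fun i => x (i + k)

def PositivelyPeriodicZ {A : Type*} (x : ℤ → A) : Prop :=
  ∃ (N : ℤ) (p : ℕ), 1 ≤ p ∧ ∀ n : ℤ, N ≤ n → x n = x (n + (p : ℤ))

def NegativelyPeriodicZ {A : Type*} (x : ℤ → A) : Prop :=
  ∃ (N : ℤ) (p : ℕ), 1 ≤ p ∧ ∀ n : ℤ, n ≤ N → x n = x (n - (p : ℤ))

def EventuallyPeriodicZ {A : Type*} (x : ℤ → A) : Prop :=
  PositivelyPeriodicZ x ∨ NegativelyPeriodicZ x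

def AperiodicZ {A : Type*} (x : ℤ → A) : Prop := ¬ EventuallyPeriodicZ x

def PurelyPeriodicZ {A : Type*} (x : ℤ → A) : Prop :=
  ∃ p : ℕ, 1 ≤ p ∧ ∀ n : ℤ, x n = x (n + (p : ℤ))

def LeftSpecialZ {A : Type*} (x : ℤ → A) (u : List A) : Prop :=
  ∃ a b : A, a ≠ b ∧ IsFactorZ x (a :: u) ∧ IsFactorZ x (b :: u)

def RightSpecialZ {A : Type*} (x : ℤ → A) (u : List A) : Prop :=
  ∃ a b : A, a ≠ b ∧ IsFactorZ x (u ++ [a]) ∧ IsFactorZ x (u ++ [b])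

def BispecialZ {A : Type*} (x : ℤ → A) (u : List A) : Prop :=
  LeftSpecialZ x u ∧ RightSpecialZ x u

/-- A bi-infinite word over `{0,1}` is Sturmian if it is aperiodic with complexity `n + 1`. -/
def SturmianZ (x : ℤ → Fin 2) : Prop :=
  AperiodicZ x ∧ ∀ n : ℕ, complexityZ x n = n + 1

/-- `x_{[-n, n+1]} = r_n(x) 01 l_n(x)` for all `n`. -/
def UpperCharacteristic (x : ℤ → Fin 2) : Prop :=
  SturmianZ x ∧ ∀ n : ℕ, ∃ r l : List (Fin 2),
    r.length = n ∧ RightSpecialZ x r ∧ l.length = n ∧ LeftSpecialZ x l ∧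
    subwordZ x (-(n : ℤ)) (2 * n + 2) = r ++ [0, 1] ++ l

/-- `x_{[-n, n+1]} = r_n(x) 10 l_n(x)` for all `n`. -/
def LowerCharacteristic (x : ℤ → Fin 2) : Prop :=
  SturmianZ x ∧ ∀ n : ℕ, ∃ r l : List (Fin 2),
    r.length = n ∧ RightSpecialZ x r ∧ l.length = n ∧ LeftSpecialZ x l ∧
    subwordZ x (-(n : ℤ)) (2 * n + 2) = r ++ [1, 0] ++ l

def CharacteristicSturmian (x : ℤ → Fin 2) : Prop :=
  UpperCharacteristic x ∨ LowerCharacteristic x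

def QuasiSturmianZ {A : Type*} (x : ℤ → A) : Prop :=
  AperiodicZ x ∧ ∃ (n₀ k : ℕ), 1 ≤ k ∧ ∀ n : ℕ, n₀ ≤ n → complexityZ x n = n + k

/-- Starting position in `φ(x)` of the image `φ(x_i)` (image of `x_0` starts at `0`). -/
def blockStart {A B : Type*} (φ : A → List B) (x : ℤ → A) (i : ℤ) : ℤ :=
  if 0 ≤ i then ((List.range i.toNat).map fun j => ((φ (x (j : ℤ))).length : ℤ)).sum
  else -((List.range (-i).toNat).map fun j => ((φ (x (-(j : ℤ) - 1))).length : ℤ)).sum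

/-- `y` is the image of the bi-infinite word `x` under the substitution `φ`
(with images of letters nonempty). -/
def IsSubstImage {A B : Type*} (φ : A → List B) (x : ℤ → A) (y : ℤ → B) : Prop :=
  (∀ a : A, φ a ≠ []) ∧
  ∀ i : ℤ, subwordZ y (blockStart φ x i) (φ (x i)).length = φ (x i)

/-- `φ_x(Γ)`: positions of `φ(x)` occupied by images of letters at positions in `Γ`. -/
def substSupp {A B : Type*} (φ : A → List B) (x : ℤ → A) (Γ : Set ℤ) : Set ℤ :=
  {n : ℤ | ∃ i ∈ Γ, blockStart φ x i ≤ n ∧ n < blockStart φ x i + ((φ (x i)).length : ℤ)}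

/-- `φ_x^{-1}(Γ)`: positions of letters of `x` whose image blocks in `φ(x)` meet `Γ`. -/
def substPreimage {A B : Type*} (φ : A → List B) (x : ℤ → A) (Γ : Set ℤ) : Set ℤ :=
  {i : ℤ | ∃ n ∈ Γ, blockStart φ x i ≤ n ∧ n < blockStart φ x i + ((φ (x i)).length : ℤ)}

/-- The set of occurrences of `w` in the finite word `u`. -/
def occSetF {B : Type*} (u w : List B) : Set ℕ :=
  {i : ℕ | i + w.length ≤ u.length ∧ (u.drop i).take w.length = w}

/-- `φ` is a return morphism for `w`. -/
def IsReturnMorphism {A B : Type*} (φ : A → List B) (w : List B) : Prop :=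
  w ≠ [] ∧ Function.Injective φ ∧ (∀ a : A, φ a ≠ []) ∧
  ∀ a : A, occSetF (w ++ φ a) w = {0, (φ a).length}

def listPow {A : Type*} (u : List A) : ℕ → List A
  | 0 => []
  | n + 1 => u ++ listPow u n

/-- A substitution on `{0,1}` is acyclic if `φ(0)` and `φ(1)` are not powers of one word. -/
def AcyclicSubst {A : Type*} (φ : Fin 2 → List A) : Prop :=
  ¬ ∃ (u : List A) (m n : ℕ), φ 0 = listPow u m ∧ φ 1 = listPow u n

/-- The substitution `L₀ : 0 ↦ 0, 1 ↦ 01`. -/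
def Lzero : Fin 2 → List (Fin 2) := fun a => if a = 0 then [0] else [0, 1]

/-- The substitution `L₁ : 0 ↦ 10, 1 ↦ 1`. -/
def Lone : Fin 2 → List (Fin 2) := fun a => if a = 0 then [1, 0] else [1]

/-- A finite word has period `r`. -/
def PeriodicF {A : Type*} (w : List A) (r : ℕ) : Prop :=
  ∀ i : ℕ, i + r < w.length → w[i]? = w[i + r]?

/-- `Γ` is a string attractor of the finite word `w`. -/
def IsAttractorF {A : Type*} (w : List A) (Γ : Set ℕ) : Prop :=
  ∀ u : List A, u ≠ [] → u <:+: w →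
    ∃ i : ℕ, i + u.length ≤ w.length ∧ (w.drop i).take u.length = u ∧
      ∃ p ∈ Γ, i ≤ p ∧ p < i + u.length

def RecurrentZ {A : Type*} (x : ℤ → A) : Prop :=
  ∀ w : List A, IsFactorZ x w → {i : ℤ | occursAt x w i}.Infinite

def UniformlyRecurrentZ {A : Type*} (x : ℤ → A) : Prop :=
  ∀ w : List A, IsFactorZ x w →
    ∃ n : ℕ, ∀ i : ℤ, ∃ j : ℤ, i ≤ j ∧ j + (w.length : ℤ) ≤ i + (n : ℤ) ∧ occursAt x w j

def ModuloRecurrentZ {A : Type*} (x : ℤ → A) : Prop :=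
  ∀ w : List A, IsFactorZ x w → ∀ k : ℕ, 1 ≤ k → ∀ r : ℤ,
    ∃ i : ℤ, occursAt x w i ∧ (k : ℤ) ∣ (i - r)

/-- A shift space: closed (product topology, `A` discrete) and shift-invariant. -/
def IsShiftSpace {A : Type*} (X : Set (ℤ → A)) : Prop :=
  @IsClosed _ (@Pi.topologicalSpace ℤ (fun _ => A) (fun _ => ⊥)) X ∧ shiftZ 1 '' X = X

def IsAttractorX {A : Type*} (X : Set (ℤ → A)) (Γ : Set ℤ) : Prop :=
  ∀ x ∈ X, IsAttractorZ x Γ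

def MinimalShift {A : Type*} (X : Set (ℤ → A)) : Prop :=
  IsShiftSpace X ∧ ∀ Y ⊆ X, IsShiftSpace Y → Y = ∅ ∨ Y = X

/-- The orbit closure of a bi-infinite word (product topology, `A` discrete). -/
def orbitClosureZ {A : Type*} (x : ℤ → A) : Set (ℤ → A) :=
  @closure _ (@Pi.topologicalSpace ℤ (fun _ => A) (fun _ => ⊥)) {y | ∃ k : ℤ, y = shiftZ k x}

namespace SAux

variable {A : Type*}

lemma subwordZ_eq (x : ℤ → A) (i : ℤ) (n : ℕ) :
    subwordZ x i n = (List.range n).map (fun t : ℕ => x (i + t)) := by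
  unfold subwordZ
  simp only [List.bind_eq_flatMap, List.pure_def, ← List.map_eq_flatMap, List.map_map]
  rfl

lemma subwordZ_length (x : ℤ → A) (i : ℤ) (n : ℕ) : (subwordZ x i n).length = n := by
  rw [subwordZ_eq]; simp

lemma subword_eq_iff {x y : ℤ → A} {i j : ℤ} {n : ℕ} :
    subwordZ x i n = subwordZ y j n ↔ ∀ t : ℕ, t < n → x (i + t) = y (j + t) := by
  rw [subwordZ_eq, subwordZ_eq, List.map_inj_left]
  constructor
  · intro h t ht; exact h t (List.mem_range.mpr ht)
  · intro h t ht; exact h t (List.mem_range.mp ht)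

/-- pointwise window equality -/
def Ew (x : ℤ → A) (n : ℕ) (i j : ℤ) : Prop := ∀ t : ℕ, t < n → x (i + t) = x (j + t)

lemma Ew.refl (x : ℤ → A) (n : ℕ) (i : ℤ) : Ew x n i i := fun _ _ => rfl

lemma Ew.symm {x : ℤ → A} {n : ℕ} {i j : ℤ} (h : Ew x n i j) : Ew x n j i :=
  fun t ht => (h t ht).symm

lemma Ew.trans {x : ℤ → A} {n : ℕ} {i j k : ℤ} (h1 : Ew x n i j) (h2 : Ew x n j k) :
    Ew x n i k := fun t ht => (h1 t ht).trans (h2 t ht)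

lemma Ew.mono {x : ℤ → A} {n m : ℕ} {i j : ℤ} (h : Ew x n i j) (hm : m ≤ n) : Ew x m i j :=
  fun t ht => h t (lt_of_lt_of_le ht hm)

/-- the window hypothesis: every window of length `n` occurs with start in any
interval of starts `[j, j + n + s]`. -/
def WH (x : ℤ → A) (s : ℕ) : Prop :=
  ∀ n : ℕ, 1 ≤ n → ∀ i j : ℤ, ∃ k : ℤ, j ≤ k ∧ k ≤ j + (n : ℤ) + (s : ℤ) ∧ Ew x n i k

lemma shiftZ_shiftZ (k l : ℤ) (x : ℤ → A) : shiftZ k (shiftZ l x) = shiftZ (k + l) x := by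
  funext i; simp [shiftZ, add_assoc]

lemma shiftZ_zero (x : ℤ → A) : shiftZ 0 x = x := by funext i; simp [shiftZ]

lemma shift_mem {X : Set (ℤ → A)} (hXs : shiftZ 1 '' X = X) (k : ℤ) {x : ℤ → A}
    (hx : x ∈ X) : shiftZ k x ∈ X := by
  have h1 : ∀ y ∈ X, shiftZ 1 y ∈ X := by
    intro y hy
    rw [← hXs]; exact ⟨y, hy, rfl⟩
  have hm1 : ∀ y ∈ X, shiftZ (-1) y ∈ X := by
    intro y hy
    rw [← hXs] at hy
    obtain ⟨z, hz, rfl⟩ := hy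
    have : shiftZ (-1) (shiftZ 1 z) = z := by
      rw [shiftZ_shiftZ]; norm_num [shiftZ_zero]
    rw [this]; exact hz
  induction k using Int.induction_on with
  | zero => rw [shiftZ_zero]; exact hx
  | succ n ih =>
      have := h1 _ ih
      rwa [shiftZ_shiftZ, add_comm] at this
  | pred n ih =>
      have := hm1 _ ih
      rw [shiftZ_shiftZ] at this
      have e : (-1 + -(n:ℤ)) = (-(n:ℤ) - 1) := by ring
      rwa [e] at this
      
end SAux
namespace SAux

variable {A : Type*}

lemma occursAt_subword_iff {x : ℤ → A} {i k : ℤ} {n : ℕ} :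
    occursAt x (subwordZ x i n) k ↔ Ew x n k i := by
  unfold occursAt
  rw [subwordZ_length, subword_eq_iff]
  rfl

lemma subwordZ_shift (k : ℤ) (x : ℤ → A) (i : ℤ) (n : ℕ) :
    subwordZ (shiftZ k x) i n = subwordZ x (i + k) n := by
  rw [subwordZ_eq, subwordZ_eq]
  apply List.map_congr_left
  intro t _
  show x (i + t + k) = x (i + k + t)
  ring_nf

lemma subwordZ_ne_nil {x : ℤ → A} {i : ℤ} {n : ℕ} (hn : 1 ≤ n) : subwordZ x i n ≠ [] := by
  intro h
  have := subwordZ_length x i n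
  rw [h] at this
  simp at this
  omega

/-- from a finite attractor of a shift space: the window hypothesis for each element -/
lemma wh_of_attractor {X : Set (ℤ → A)} (hXs : shiftZ 1 '' X = X) {Γ : Set ℤ}
    (hatt : IsAttractorX X Γ) {m M : ℤ} (hmM : m ≤ M) (hΓ : ∀ p ∈ Γ, m ≤ p ∧ p ≤ M)
    {x : ℤ → A} (hx : x ∈ X) : WH x (M - m).toNat := by
  intro n hn i j
  set k0 : ℤ := j + (n : ℤ) - 1 - m with hk0
  set y := shiftZ k0 x with hy
  have hyX : y ∈ X := shift_mem hXs k0 hx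
  set w := subwordZ x i n with hw
  have hwlen : w.length = n := subwordZ_length x i n
  have hwne : w ≠ [] := subwordZ_ne_nil hn
  have hfact : IsFactorZ y w := by
    refine ⟨i - k0, ?_⟩
    unfold occursAt
    rw [hwlen, hw, hy, subwordZ_shift]
    congr 1
    omega
  obtain ⟨i', hocc, p, hpΓ, hip1, hip2⟩ := hatt y hyX w hwne hfact
  obtain ⟨hpm, hpM⟩ := hΓ p hpΓ
  refine ⟨i' + k0, ?_, ?_, ?_⟩
  · rw [hwlen] at hip2; omega
  · have : ((M - m).toNat : ℤ) = M - m := Int.toNat_of_nonneg (by omega)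
    rw [hwlen] at hip2; omega
  · -- Ew x n i (i' + k0)
    unfold occursAt at hocc
    rw [hwlen, hy, subwordZ_shift, hw] at hocc
    intro t ht
    exact (subword_eq_iff.mp hocc t ht).symm

end SAux
namespace SAux

section Main

variable {A : Type*} {x : ℤ → A} {s : ℕ}

/-- there is a mismatch at distance `d` in every window -/
lemma syn (hw : WH x s) (hap : ∀ p : ℕ, 1 ≤ p → ∃ t : ℤ, x t ≠ x (t + (p : ℤ)))
    (d : ℕ) (hd : 1 ≤ d) (a : ℤ) :
    ∃ t : ℤ, a ≤ t ∧ t ≤ a + (d : ℤ) + 1 + (s : ℤ) ∧ x t ≠ x (t + (d : ℤ)) := by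
  obtain ⟨t₀, h0⟩ := hap d hd
  obtain ⟨k, h1, h2, hE⟩ := hw (d + 1) (by omega) t₀ a
  refine ⟨k, h1, by push_cast at h2 ⊢; omega, ?_⟩
  have e0 := hE 0 (by omega)
  have ed := hE d (by omega)
  simp only [Nat.cast_zero, add_zero] at e0
  intro hc
  exact h0 (by rw [e0, hc, ← ed])

/-- no long period-`d` runs -/
lemma runbound (hw : WH x s) (hap : ∀ p : ℕ, 1 ≤ p → ∃ t : ℤ, x t ≠ x (t + (p : ℤ)))
    (d : ℕ) (hd : 1 ≤ d) (p : ℤ) (L : ℕ)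
    (hrun : ∀ t : ℤ, p ≤ t → t < p + (L : ℤ) → x t = x (t + (d : ℤ))) :
    L ≤ d + s + 1 := by
  by_contra hL
  push_neg at hL
  obtain ⟨t, h1, h2, h3⟩ := syn hw hap d hd p
  exact h3 (hrun t h1 (by push_cast; omega))

/-- canonical representative system for window classes -/
def Hrp (x : ℤ → A) (s : ℕ) (rp : ℕ → ℤ → ℕ) : Prop :=
  (∀ n : ℕ, ∀ i : ℤ, rp n i ≤ n + s) ∧ (∀ n : ℕ, ∀ i : ℤ, Ew x n i ((rp n i : ℕ) : ℤ)) ∧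
    (∀ n : ℕ, ∀ i j : ℤ, Ew x n i j → rp n i = rp n j)

lemma rep_exists (hw : WH x s) : ∃ rp : ℕ → ℤ → ℕ, Hrp x s rp := by
  have key : ∀ n : ℕ, ∀ i : ℤ, ∃ m : ℕ, m ≤ n + s ∧ Ew x n i (m : ℤ) := by
    intro n i
    rcases Nat.eq_zero_or_pos n with h0 | hpos
    · exact ⟨0, by omega, fun t ht => by omega⟩
    · obtain ⟨k, h1, h2, hE⟩ := hw n hpos i 0
      have hk : (k.toNat : ℤ) = k := Int.toNat_of_nonneg (by omega)
      refine ⟨k.toNat, by omega, by rwa [hk]⟩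
  refine ⟨fun n i => Nat.find (key n i), fun n i => (Nat.find_spec (key n i)).1,
    fun n i => (Nat.find_spec (key n i)).2, ?_⟩
  intro n i j hij
  apply le_antisymm
  · exact Nat.find_min' _ ⟨(Nat.find_spec (key n j)).1, hij.trans (Nat.find_spec (key n j)).2⟩
  · exact Nat.find_min' _ ⟨(Nat.find_spec (key n i)).1, hij.symm.trans (Nat.find_spec (key n i)).2⟩

variable {rp : ℕ → ℤ → ℕ}

/-- the finite set of canonical representatives at level `n` -/
def Reps (s : ℕ) (rp : ℕ → ℤ → ℕ) (n : ℕ) : Finset ℕ :=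
  (Finset.range (n + s + 1)).image (fun m : ℕ => rp n (m : ℤ))

def cc (s : ℕ) (rp : ℕ → ℤ → ℕ) (n : ℕ) : ℕ := (Reps s rp n).card

lemma rp_eq_iff (h : Hrp x s rp) {n : ℕ} {i j : ℤ} : rp n i = rp n j ↔ Ew x n i j := by
  constructor
  · intro he
    exact (h.2.1 n i).trans (by rw [he]; exact (h.2.1 n j).symm)
  · exact h.2.2 n i j

lemma rp_mem (h : Hrp x s rp) (n : ℕ) (i : ℤ) : rp n i ∈ Reps s rp n := by
  refine Finset.mem_image.mpr ⟨rp n i, Finset.mem_range.mpr (by have := h.1 n i; omega), ?_⟩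
  exact (rp_eq_iff h).mpr (h.2.1 n i).symm

lemma rp_down (h : Hrp x s rp) (n : ℕ) (i : ℤ) : rp n ((rp (n + 1) i : ℕ) : ℤ) = rp n i :=
  (rp_eq_iff h).mpr (((h.2.1 (n + 1) i).symm).mono (by omega))

lemma reps_eq_image (h : Hrp x s rp) (n : ℕ) :
    Reps s rp n = (Reps s rp (n + 1)).image (fun m : ℕ => rp n ((m : ℕ) : ℤ)) := by
  apply Finset.Subset.antisymm
  · intro a ha
    obtain ⟨m, _, rfl⟩ := Finset.mem_image.mp ha
    refine Finset.mem_image.mpr ⟨rp (n + 1) (m : ℤ), rp_mem h _ _, rp_down h n (m : ℤ)⟩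
  · intro a ha
    obtain ⟨m, hm, rfl⟩ := Finset.mem_image.mp ha
    obtain ⟨m', _, rfl⟩ := Finset.mem_image.mp hm
    rw [rp_down h n (m' : ℤ)]
    exact rp_mem h _ _

lemma cc_mono (h : Hrp x s rp) (n : ℕ) : cc s rp n ≤ cc s rp (n + 1) := by
  unfold cc
  rw [reps_eq_image h n]
  exact Finset.card_image_le

lemma cc_le (h : Hrp x s rp) (n : ℕ) : cc s rp n ≤ n + s + 1 := by
  unfold cc Reps
  exact Finset.card_image_le.trans (by rw [Finset.card_range])

lemma cc_pos (h : Hrp x s rp) (n : ℕ) : 1 ≤ cc s rp n :=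
  Finset.card_pos.mpr ⟨rp n 0, rp_mem h n 0⟩

end Main

end SAux
namespace SAux

section Main

variable {A : Type*} {x : ℤ → A} {s : ℕ} {rp : ℕ → ℤ → ℕ}

/-- if there is no right special class at some level, the word is periodic;
hence under aperiodicity right-special classes exist at every level. -/
lemma rs_exists (h : Hrp x s rp) (hap : ∀ p : ℕ, 1 ≤ p → ∃ t : ℤ, x t ≠ x (t + (p : ℤ)))
    (n : ℕ) (hn : 1 ≤ n) :
    ∃ i j : ℤ, Ew x n i j ∧ x (i + (n : ℤ)) ≠ x (j + (n : ℤ)) := by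
  by_contra hc
  push_neg at hc
  -- hc : determinism
  set σ : ℕ → ℕ := fun m => rp n ((m : ℤ) + 1) with hσ
  have step : ∀ i : ℤ, rp n (i + 1) = σ (rp n i) := by
    intro i
    apply h.2.2
    intro t ht
    rcases Nat.lt_or_ge (t + 1) n with hlt | hge
    · have e := h.2.1 n i (t + 1) hlt
      have e1 : i + 1 + (t : ℤ) = i + ((t + 1 : ℕ) : ℤ) := by push_cast; ring
      have e2 : ((rp n i : ℕ) : ℤ) + 1 + (t : ℤ) = ((rp n i : ℕ) : ℤ) + ((t + 1 : ℕ) : ℤ) := by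
        push_cast; ring
      rw [e1, e2]; exact e
    · have ht' : (t : ℤ) = (n : ℤ) - 1 := by omega
      have e := hc i ((rp n i : ℕ) : ℤ) (h.2.1 n i)
      have e1 : i + 1 + (t : ℤ) = i + (n : ℤ) := by omega
      have e2 : ((rp n i : ℕ) : ℤ) + 1 + (t : ℤ) = ((rp n i : ℕ) : ℤ) + (n : ℤ) := by omega
      rw [e1, e2]; exact e
  have iter : ∀ (k : ℕ) (i : ℤ), rp n (i + (k : ℤ)) = σ^[k] (rp n i) := by
    intro k
    induction k with
    | zero => intro i; simp
    | succ k ih =>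
        intro i
        have e : i + ((k + 1 : ℕ) : ℤ) = (i + (k : ℤ)) + 1 := by push_cast; ring
        rw [e, step (i + (k : ℤ)), ih i, Function.iterate_succ_apply']
  have σmem : ∀ m : ℕ, σ m ∈ Reps s rp n := fun m => rp_mem h n _
  set S : ℕ → Finset ℕ := fun k => (Reps s rp n).image (σ^[k]) with hS
  have S0 : S 0 = Reps s rp n := by simp [hS]
  have Ssucc : ∀ k, S (k + 1) = (S k).image σ := by
    intro k
    simp only [hS, Finset.image_image]
    apply Finset.image_congr
    intro a _
    exact Function.iterate_succ_apply' σ k a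
  have Ssub : ∀ k, S (k + 1) ⊆ S k := by
    intro k
    simp only [hS]
    intro a ha
    obtain ⟨m, hm, rfl⟩ := Finset.mem_image.mp ha
    refine Finset.mem_image.mpr ⟨σ m, σmem m, ?_⟩
    rw [← Function.iterate_succ_apply]
  have acard : ∀ k, (S (k + 1)).card ≤ (S k).card := fun k => Finset.card_le_card (Ssub k)
  -- stabilization
  have stab : ∃ K, (S (K + 1)).card = (S K).card := by
    by_contra hst
    push_neg at hst
    have hdec : ∀ k, (S (k + 1)).card + 1 ≤ (S k).card := by
      intro k
      have := acard k
      have := hst k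
      omega
    have hbound : ∀ k, (S k).card + k ≤ (S 0).card := by
      intro k
      induction k with
      | zero => omega
      | succ k ih =>
          have := hdec k
          omega
    have h1 := hbound ((S 0).card + 1)
    have : 1 ≤ (S ((S 0).card + 1)).card := by
      apply Finset.card_pos.mpr
      refine ⟨σ^[(S 0).card + 1] (rp n 0), Finset.mem_image.mpr ⟨rp n 0, rp_mem h n 0, rfl⟩⟩
    omega
  obtain ⟨K, hK⟩ := stab
  set E := S K with hE
  have hEimage : E.image σ = E := by
    have h1 : E.image σ = S (K + 1) := (Ssucc K).symm
    rw [h1]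
    exact Finset.eq_of_subset_of_card_le (Ssub K) (by omega)
  have hinj : Set.InjOn σ (E : Set ℕ) :=
    Finset.injOn_of_card_image_eq (by rw [hEimage])
  have hmemE : ∀ i : ℤ, rp n i ∈ E := by
    intro i
    have e : rp n i = σ^[K] (rp n (i - (K : ℤ))) := by
      have := iter K (i - (K : ℤ))
      rw [sub_add_cancel] at this
      exact this
    rw [e, hE]
    exact Finset.mem_image.mpr ⟨rp n (i - (K : ℤ)), rp_mem h n _, rfl⟩
  have hσE : ∀ m ∈ E, σ m ∈ E := by
    intro m hm
    rw [← hEimage]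
    exact Finset.mem_image_of_mem σ hm
  have hiterE : ∀ (k : ℕ), ∀ m ∈ E, σ^[k] m ∈ E := by
    intro k
    induction k with
    | zero => intro m hm; simpa using hm
    | succ k ih =>
        intro m hm
        rw [Function.iterate_succ_apply']
        exact hσE _ (ih m hm)
  have peel : ∀ (k : ℕ), ∀ m m' , m ∈ E → m' ∈ E → σ^[k] m = σ^[k] m' → m = m' := by
    intro k
    induction k with
    | zero => intro m m' _ _ he; simpa using he
    | succ k ih =>
        intro m m' hm hm' he
        rw [Function.iterate_succ_apply', Function.iterate_succ_apply'] at he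
        exact ih m m' hm hm' (hinj (hiterE k m hm) (hiterE k m' hm') he)
  -- each element has a period dividing factorial
  have hper : ∀ m ∈ E, σ^[E.card.factorial] m = m := by
    intro m hm
    -- pigeonhole on iterates
    have hmaps : ∀ k ∈ Finset.range (E.card + 1), σ^[k] m ∈ E := fun k _ => hiterE k m hm
    have hlt : E.card < (Finset.range (E.card + 1)).card := by rw [Finset.card_range]; omega
    obtain ⟨k, hk, l, hl, hkl, he⟩ :=
      Finset.exists_ne_map_eq_of_card_lt_of_maps_to hlt hmaps
    have key : ∀ k l : ℕ, k < l → l ≤ E.card → σ^[k] m = σ^[l] m →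
        σ^[E.card.factorial] m = m := by
      intro k l hkl' hlE he'
      have hsplit : σ^[l] m = σ^[k] (σ^[l - k] m) := by
        rw [← Function.iterate_add_apply]
        congr 1
        omega
      have hfix : σ^[l - k] m = m := by
        apply peel k (σ^[l - k] m) m (hiterE _ m hm) hm
        rw [← hsplit, he']
      set P := l - k with hP
      have hP1 : 1 ≤ P := by omega
      have hPle : P ≤ E.card := by omega
      obtain ⟨q, hq⟩ := Nat.dvd_factorial hP1 hPle
      rw [hq, Function.iterate_mul]
      clear hq
      induction q with
      | zero => simp
      | succ q ih => rw [Function.iterate_succ_apply, hfix, ih]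
    have hkE : k ≤ E.card := by
      have := Finset.mem_range.mp hk; omega
    have hlE : l ≤ E.card := by
      have := Finset.mem_range.mp hl; omega
    rcases Nat.lt_or_ge k l with hkl' | hkl'
    · exact key k l hkl' hlE he
    · have hkl'' : l < k := by omega
      exact key l k hkl'' hkE he.symm
  -- conclusion: global period
  set M := E.card.factorial with hM
  have hMpos : 1 ≤ M := Nat.factorial_pos _
  have hfix : ∀ i : ℤ, rp n (i + (M : ℤ)) = rp n i := by
    intro i
    rw [iter M i, hper _ (hmemE i)]
  have hEq : ∀ i : ℤ, x (i + (M : ℤ)) = x i := by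
    intro i
    have hEw : Ew x n (i + (M : ℤ)) i := (rp_eq_iff h).mp (hfix i)
    have := hEw 0 (by omega)
    simpa using this
  obtain ⟨t, ht⟩ := hap M hMpos
  exact ht (hEq t).symm

end Main

end SAux
namespace SAux

section Main

variable {A : Type*} {x : ℤ → A} {s : ℕ} {rp : ℕ → ℤ → ℕ}

lemma rp_succ_ne (h : Hrp x s rp) {n : ℕ} {i j : ℤ}
    (hne : x (i + (n : ℤ)) ≠ x (j + (n : ℤ))) : rp (n + 1) i ≠ rp (n + 1) j := by
  intro he
  have hEw : Ew x (n + 1) i j := (rp_eq_iff h).mp he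
  exact hne (hEw n (by omega))

lemma cc_strict (h : Hrp x s rp) (hap : ∀ p : ℕ, 1 ≤ p → ∃ t : ℤ, x t ≠ x (t + (p : ℤ)))
    (n : ℕ) (hn : 1 ≤ n) : cc s rp n < cc s rp (n + 1) := by
  obtain ⟨i, j, hE, hne⟩ := rs_exists h hap n hn
  rcases lt_or_eq_of_le (cc_mono h n) with hlt | heq
  · exact hlt
  · exfalso
    have hinj : Set.InjOn (fun m : ℕ => rp n ((m : ℕ) : ℤ)) ((Reps s rp (n + 1)) : Set ℕ) := by
      apply Finset.injOn_of_card_image_eq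
      rw [← reps_eq_image h n]
      unfold cc at heq
      exact heq
    have h1 : rp n ((rp (n + 1) i : ℕ) : ℤ) = rp n ((rp (n + 1) j : ℕ) : ℤ) := by
      rw [rp_down h n i, rp_down h n j]
      exact (rp_eq_iff h).mpr hE
    have := hinj (rp_mem h (n + 1) i) (rp_mem h (n + 1) j) h1
    exact rp_succ_ne h hne this

lemma level_choice (h : Hrp x s rp) (hap : ∀ p : ℕ, 1 ≤ p → ∃ t : ℤ, x t ≠ x (t + (p : ℤ))) :
    ∃ n : ℕ, s + 2 ≤ n ∧ cc s rp (n + 1) = cc s rp n + 1 := by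
  by_contra hc
  push_neg at hc
  have h2 : ∀ n : ℕ, s + 2 ≤ n → cc s rp n + 2 ≤ cc s rp (n + 1) := by
    intro n hn
    have := cc_strict h hap n (by omega)
    have := hc n hn
    omega
  have h3 : ∀ k : ℕ, cc s rp (s + 2) + 2 * k ≤ cc s rp (s + 2 + k) := by
    intro k
    induction k with
    | zero => simp
    | succ k ih =>
        have := h2 (s + 2 + k) (by omega)
        have e : s + 2 + (k + 1) = (s + 2 + k) + 1 := by omega
        rw [e]
        omega
  have h4 := h3 (2 * s + 3)
  have h5 := cc_le h (s + 2 + (2 * s + 3))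
  have h6 := cc_pos h (s + 2)
  omega

/-- at a level where the complexity increment is exactly one: the right-special class is
unique and has exactly two extensions -/
lemma unique_rs (h : Hrp x s rp) (n : ℕ)
    (hcc : cc s rp (n + 1) = cc s rp n + 1)
    {i j : ℤ} (hE : Ew x n i j) (hne : x (i + (n : ℤ)) ≠ x (j + (n : ℤ))) :
    (∀ i' j' : ℤ, Ew x n i' j' → x (i' + (n : ℤ)) ≠ x (j' + (n : ℤ)) → Ew x n i' i) ∧
    (∀ p : ℤ, Ew x n p i → x (p + (n : ℤ)) = x (i + (n : ℤ)) ∨ x (p + (n : ℤ)) = x (j + (n : ℤ))) := by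
  set ψ : ℕ → ℕ := fun m => rp (n + 1) ((m : ℕ) : ℤ) with hψ
  set φ : ℕ → ℕ := fun m => rp n ((m : ℕ) : ℤ) with hφ
  have hφψ : ∀ m ∈ Reps s rp n, φ (ψ m) = m := by
    intro m hm
    obtain ⟨m', _, rfl⟩ := Finset.mem_image.mp hm
    show rp n ((rp (n + 1) ((rp n (m' : ℤ) : ℕ) : ℤ) : ℕ) : ℤ) = rp n (m' : ℤ)
    rw [rp_down h n]
    exact (rp_eq_iff h).mpr ((h.2.1 n (m' : ℤ)).symm)
  have hψmem : ∀ m ∈ Reps s rp n, ψ m ∈ Reps s rp (n + 1) := fun m _ => rp_mem h (n + 1) _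
  have hψinj : Set.InjOn ψ ((Reps s rp n) : Set ℕ) := by
    intro a ha b hb he
    rw [← hφψ a ha, ← hφψ b hb, he]
  have extra : ∀ e1 e2 : ℕ, e1 ∈ Reps s rp (n + 1) → e2 ∈ Reps s rp (n + 1) → e1 ≠ e2 →
      (∀ m ∈ Reps s rp n, ψ m ≠ e1) → (∀ m ∈ Reps s rp n, ψ m ≠ e2) → False := by
    intro e1 e2 he1 he2 hne12 hm1 hm2
    have himage : (Reps s rp n).image ψ ⊆ (Reps s rp (n + 1)) \ {e1, e2} := by
      intro a ha
      obtain ⟨m, hm, rfl⟩ := Finset.mem_image.mp ha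
      rw [Finset.mem_sdiff]
      refine ⟨hψmem m hm, ?_⟩
      simp only [Finset.mem_insert, Finset.mem_singleton]
      push_neg
      exact ⟨hm1 m hm, hm2 m hm⟩
    have hcard1 : cc s rp n = ((Reps s rp n).image ψ).card :=
      (Finset.card_image_of_injOn hψinj).symm
    have hsub : ({e1, e2} : Finset ℕ) ⊆ Reps s rp (n + 1) := by
      intro a ha
      simp only [Finset.mem_insert, Finset.mem_singleton] at ha
      rcases ha with rfl | rfl
      · exact he1
      · exact he2
    have hpair : ({e1, e2} : Finset ℕ).card = 2 := by
      rw [Finset.card_insert_of_notMem (by simpa using hne12), Finset.card_singleton]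
    have hcard2 : ((Reps s rp n).image ψ).card ≤ (Reps s rp (n + 1)).card - 2 := by
      refine (Finset.card_le_card himage).trans ?_
      rw [Finset.card_sdiff_of_subset hsub, hpair]
    have hrepcard : (Reps s rp (n + 1)).card = cc s rp (n + 1) := rfl
    have hge2 : 2 ≤ (Reps s rp (n + 1)).card := by
      have := Finset.card_le_card hsub
      omega
    have := cc_pos h n
    omega
  have at_most_one : ∀ Ma Mb : ℕ, φ Ma = φ Mb →
      (∃ ma ∈ Reps s rp n, ψ ma = Ma) → (∃ mb ∈ Reps s rp n, ψ mb = Mb) → Ma = Mb := by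
    rintro Ma Mb hfib ⟨ma, hma, rfl⟩ ⟨mb, hmb, rfl⟩
    have : ma = mb := by
      have e1 := hφψ ma hma
      have e2 := hφψ mb hmb
      rw [← e1, ← e2] at *
      omega
    rw [this]
  -- generic: from two distinct same-fiber elements produce one non-image element
  have pick : ∀ Ma Mb : ℕ, Ma ≠ Mb → φ Ma = φ Mb →
      ∃ e, (e = Ma ∨ e = Mb) ∧ ∀ m ∈ Reps s rp n, ψ m ≠ e := by
    intro Ma Mb hab hfib
    by_cases hcase : ∃ m ∈ Reps s rp n, ψ m = Ma
    · refine ⟨Mb, Or.inr rfl, ?_⟩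
      intro m hm heq
      exact hab (at_most_one Ma Mb hfib hcase ⟨m, hm, heq⟩)
    · push_neg at hcase
      exact ⟨Ma, Or.inl rfl, hcase⟩
  have hφrp : ∀ u : ℤ, φ (rp (n + 1) u) = rp n u := fun u => rp_down h n u
  constructor
  · -- uniqueness of the right-special class
    intro i' j' hE' hne'
    by_contra hcon
    have hMn : rp n i ≠ rp n i' := by
      intro he
      exact hcon ((rp_eq_iff h).mp he.symm)
    have h12 : φ (rp (n + 1) i) = φ (rp (n + 1) j) := by
      rw [hφrp, hφrp]; exact (rp_eq_iff h).mpr hE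
    have h34 : φ (rp (n + 1) i') = φ (rp (n + 1) j') := by
      rw [hφrp, hφrp]; exact (rp_eq_iff h).mpr hE'
    obtain ⟨e1, he1or, he1⟩ := pick _ _ (rp_succ_ne h hne) h12
    obtain ⟨e2, he2or, he2⟩ := pick _ _ (rp_succ_ne h hne') h34
    have hφe1 : φ e1 = rp n i := by
      rcases he1or with rfl | rfl
      · exact hφrp i
      · rw [hφrp]; exact ((rp_eq_iff h).mpr hE).symm
    have hφe2 : φ e2 = rp n i' := by
      rcases he2or with rfl | rfl
      · exact hφrp i'
      · rw [hφrp]; exact ((rp_eq_iff h).mpr hE').symm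
    have hne12 : e1 ≠ e2 := by
      intro he
      rw [he, hφe2] at hφe1
      exact hMn hφe1.symm
    have hmem1 : e1 ∈ Reps s rp (n + 1) := by
      rcases he1or with rfl | rfl <;> exact rp_mem h _ _
    have hmem2 : e2 ∈ Reps s rp (n + 1) := by
      rcases he2or with rfl | rfl <;> exact rp_mem h _ _
    exact extra e1 e2 hmem1 hmem2 hne12 he1 he2
  · -- exactly two extension letters
    intro p hEp
    by_contra hcon
    push_neg at hcon
    obtain ⟨hc1, hc2⟩ := hcon
    set M1 := rp (n + 1) i with hM1
    set M2 := rp (n + 1) j with hM2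
    set M5 := rp (n + 1) p with hM5
    have hEpi : Ew x n p i := hEp
    have hEpj : Ew x n p j := hEp.trans hE
    have d12 : M1 ≠ M2 := rp_succ_ne h hne
    have d51 : M5 ≠ M1 := rp_succ_ne h hc1
    have d52 : M5 ≠ M2 := rp_succ_ne h hc2
    have f12 : φ M1 = φ M2 := by rw [hM1, hM2, hφrp, hφrp]; exact (rp_eq_iff h).mpr hE
    have f51 : φ M5 = φ M1 := by rw [hM5, hM1, hφrp, hφrp]; exact (rp_eq_iff h).mpr hEpi
    have f52 : φ M5 = φ M2 := by rw [hM5, hM2, hφrp, hφrp]; exact (rp_eq_iff h).mpr hEpj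
    have mem1 : M1 ∈ Reps s rp (n + 1) := rp_mem h _ _
    have mem2 : M2 ∈ Reps s rp (n + 1) := rp_mem h _ _
    have mem5 : M5 ∈ Reps s rp (n + 1) := rp_mem h _ _
    by_cases h1 : ∃ m ∈ Reps s rp n, ψ m = M1
    · -- extras M2 M5
      refine extra M2 M5 mem2 mem5 (Ne.symm d52) ?_ ?_
      · intro m hm heq
        exact d12 (at_most_one M1 M2 f12 h1 ⟨m, hm, heq⟩)
      · intro m hm heq
        exact d51.symm (at_most_one M1 M5 f51.symm h1 ⟨m, hm, heq⟩)
    · push_neg at h1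
      by_cases h2 : ∃ m ∈ Reps s rp n, ψ m = M2
      · refine extra M1 M5 mem1 mem5 (Ne.symm d51) h1 ?_
        intro m hm heq
        exact d52.symm (at_most_one M2 M5 f52.symm h2 ⟨m, hm, heq⟩)
      · push_neg at h2
        exact extra M1 M2 mem1 mem2 d12 h1 h2

end Main

end SAux
namespace SAux

/-- **Main Lemma**: a bi-infinite word all of whose windows occur in every interval of
starts of bounded slack is purely periodic. -/
lemma wh_periodic {A : Type*} (x : ℤ → A) (s : ℕ) (hw : WH x s) : PurelyPeriodicZ x := by
  by_contra hper
  unfold PurelyPeriodicZ at hper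
  push_neg at hper
  have hap : ∀ p : ℕ, 1 ≤ p → ∃ t : ℤ, x t ≠ x (t + (p : ℤ)) := hper
  obtain ⟨rp, h⟩ := rep_exists hw
  obtain ⟨n, hns, hcc⟩ := level_choice h hap
  have hn1 : 1 ≤ n := by omega
  obtain ⟨i0, j0, hE0, hne0⟩ := rs_exists h hap n hn1
  obtain ⟨huniq, hletters⟩ := unique_rs h n hcc hE0 hne0
  -- determinism away from the special class
  have det : ∀ u v : ℤ, Ew x n u v → ¬ Ew x n u i0 → x (u + (n : ℤ)) = x (v + (n : ℤ)) := by
    intro u v hEuv hnot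
    by_contra hne
    exact hnot (huniq u v hEuv hne)
  -- next occurrence of the special class
  have nxt_ex : ∀ p : ℤ, ∃ m : ℕ, (m : ℤ) ≤ (n : ℤ) + (s : ℤ) ∧ Ew x n (p + 1 + (m : ℤ)) i0 := by
    intro p
    obtain ⟨k, h1, h2, hk⟩ := hw n hn1 i0 (p + 1)
    refine ⟨(k - (p + 1)).toNat, ?_, ?_⟩
    · have e : (((k - (p + 1)).toNat : ℕ) : ℤ) = k - (p + 1) := Int.toNat_of_nonneg (by omega)
      omega
    · have e : (((k - (p + 1)).toNat : ℕ) : ℤ) = k - (p + 1) := Int.toNat_of_nonneg (by omega)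
      rw [e]
      have e2 : p + 1 + (k - (p + 1)) = k := by ring
      rw [e2]
      exact hk.symm
  set nxt : ℤ → ℤ := fun p => p + 1 + ((Nat.find (nxt_ex p) : ℕ) : ℤ) with hnxt
  have nxt_mem : ∀ p : ℤ, Ew x n (nxt p) i0 := fun p => (Nat.find_spec (nxt_ex p)).2
  have nxt_gt : ∀ p : ℤ, p < nxt p := by
    intro p
    have : (0 : ℤ) ≤ ((Nat.find (nxt_ex p) : ℕ) : ℤ) := by positivity
    simp only [hnxt]
    omega
  have nxt_le : ∀ p : ℤ, nxt p ≤ p + 1 + (n : ℤ) + (s : ℤ) := by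
    intro p
    have := (Nat.find_spec (nxt_ex p)).1
    simp only [hnxt]
    omega
  have nxt_min : ∀ p t : ℤ, p < t → t < nxt p → ¬ Ew x n t i0 := by
    intro p t h1 h2 hEt
    have hcast : (((t - p - 1).toNat : ℕ) : ℤ) = t - p - 1 := Int.toNat_of_nonneg (by omega)
    have hm : (t - p - 1).toNat < Nat.find (nxt_ex p) := by
      simp only [hnxt] at h2
      omega
    apply Nat.find_min (nxt_ex p) hm
    constructor
    · have hb := (Nat.find_spec (nxt_ex p)).1
      omega
    · rw [hcast]
      have e : p + 1 + (t - p - 1) = t := by ring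
      rw [e]
      exact hEt
  -- covering: every position lies under some occurrence
  have cover : ∀ t : ℤ, ∃ p : ℤ, Ew x n p i0 ∧ p ≤ t ∧ t < nxt p := by
    intro t
    obtain ⟨k, h1, h2, hk⟩ := hw n hn1 i0 (t - 1 - (n : ℤ) - (s : ℤ))
    have hkt : k ≤ t := by omega
    have hex : ∃ m : ℕ, Ew x n (t - (m : ℤ)) i0 := by
      refine ⟨(t - k).toNat, ?_⟩
      have e : (((t - k).toNat : ℕ) : ℤ) = t - k := Int.toNat_of_nonneg (by omega)
      rw [e]
      have e2 : t - (t - k) = k := by ring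
      rw [e2]
      exact hk.symm
    set m0 := Nat.find hex with hm0
    have hspec : Ew x n (t - (m0 : ℤ)) i0 := Nat.find_spec hex
    refine ⟨t - (m0 : ℤ), hspec, by omega, ?_⟩
    by_contra hge
    push_neg at hge
    -- nxt (t - m0) ≤ t
    have h3 := nxt_gt (t - (m0 : ℤ))
    have hmem := nxt_mem (t - (m0 : ℤ))
    set q := nxt (t - (m0 : ℤ)) with hq
    have hm' : (t - q).toNat < m0 := by
      have e : (((t - q).toNat : ℕ) : ℤ) = t - q := Int.toNat_of_nonneg (by omega)
      omega
    apply Nat.find_min hex hm'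
    have e : (((t - q).toNat : ℕ) : ℤ) = t - q := Int.toNat_of_nonneg (by omega)
    rw [e]
    have e2 : t - (t - q) = q := by ring
    rw [e2]
    exact hmem
  -- the pair lemma (two occurrences with the same extension letter)
  have pair : ∀ p q : ℤ, Ew x n p i0 → Ew x n q i0 → x (p + (n : ℤ)) = x (q + (n : ℤ)) →
      ∀ u : ℕ, (u : ℤ) < (n : ℤ) + min (nxt p - p) (nxt q - q) → x (p + (u : ℤ)) = x (q + (u : ℤ)) := by
    intro p q hp hq hcl
    have hEpq : Ew x n p q := hp.trans hq.symm
    intro u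
    induction u using Nat.strong_induction_on with
    | _ u ih =>
      intro hu
      rcases Nat.lt_or_ge u n with hun | hun
      · exact hEpq u hun
      rcases Nat.eq_or_lt_of_le hun with heq | hlt
      · -- u = n
        have e1 : (u : ℤ) = (n : ℤ) := by omega
        rw [e1]
        exact hcl
      · -- u > n
        set j : ℕ := u - n with hj
        have hj1 : 1 ≤ j := by omega
        have hjlt : (j : ℤ) < min (nxt p - p) (nxt q - q) := by
          have : (j : ℤ) = (u : ℤ) - (n : ℤ) := by omega
          omega
        have hEw : Ew x n (p + (j : ℤ)) (q + (j : ℤ)) := by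
          intro t ht
          have h1 : j + t < u := by omega
          have h2 : ((j + t : ℕ) : ℤ) < (n : ℤ) + min (nxt p - p) (nxt q - q) := by
            push_cast
            omega
          have := ih (j + t) h1 h2
          have e1 : p + ((j + t : ℕ) : ℤ) = p + (j : ℤ) + (t : ℤ) := by push_cast; ring
          have e2 : q + ((j + t : ℕ) : ℤ) = q + (j : ℤ) + (t : ℤ) := by push_cast; ring
          rw [e1, e2] at this
          exact this
        have hnotT : ¬ Ew x n (p + (j : ℤ)) i0 := by
          apply nxt_min p (p + (j : ℤ)) (by omega)
          omega
        have := det (p + (j : ℤ)) (q + (j : ℤ)) hEw hnotT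
        have e1 : p + (j : ℤ) + (n : ℤ) = p + (u : ℤ) := by omega
        have e2 : q + (j : ℤ) + (n : ℤ) = q + (u : ℤ) := by omega
        rw [e1, e2] at this
        exact this
  -- equal gaps for equal letters
  have gap_le : ∀ p q : ℤ, Ew x n p i0 → Ew x n q i0 → x (p + (n : ℤ)) = x (q + (n : ℤ)) →
      nxt p - p ≤ nxt q - q := by
    intro p q hp hq hcl
    by_contra hlt
    push_neg at hlt
    -- nxt q - q < nxt p - p ; then p + (nxt q - q) is an occurrence inside (p, nxt p)
    set d := nxt q - q with hd
    have hd1 : 1 ≤ d := by have := nxt_gt q; omega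
    have hocc : Ew x n (p + d) i0 := by
      have hEpd : Ew x n (p + d) (q + d) := by
        intro t ht
        have hb : ((d.toNat + t : ℕ) : ℤ) < (n : ℤ) + min (nxt p - p) (nxt q - q) := by
          have e : ((d.toNat : ℕ) : ℤ) = d := Int.toNat_of_nonneg (by omega)
          push_cast
          omega
        have := pair p q hp hq hcl (d.toNat + t) hb
        have e : ((d.toNat : ℕ) : ℤ) = d := Int.toNat_of_nonneg (by omega)
        have e1 : p + ((d.toNat + t : ℕ) : ℤ) = p + d + (t : ℤ) := by push_cast; omega
        have e2 : q + ((d.toNat + t : ℕ) : ℤ) = q + d + (t : ℤ) := by push_cast; omega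
        rw [e1, e2] at this
        exact this
      have : q + d = nxt q := by omega
      rw [this] at hEpd
      exact hEpd.trans (nxt_mem q)
    exact nxt_min p (p + d) (by omega) (by omega) hocc
  have gap_eq : ∀ p q : ℤ, Ew x n p i0 → Ew x n q i0 → x (p + (n : ℤ)) = x (q + (n : ℤ)) →
      nxt p - p = nxt q - q := fun p q hp hq hcl =>
    le_antisymm (gap_le p q hp hq hcl) (gap_le q p hq hp hcl.symm)
  -- full content equality
  have pair_full : ∀ p q : ℤ, Ew x n p i0 → Ew x n q i0 → x (p + (n : ℤ)) = x (q + (n : ℤ)) →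
      ∀ u : ℕ, (u : ℤ) < (n : ℤ) + (nxt p - p) → x (p + (u : ℤ)) = x (q + (u : ℤ)) := by
    intro p q hp hq hcl u hu
    apply pair p q hp hq hcl u
    rw [gap_eq p q hp hq hcl] at hu ⊢
    simp only [min_self]
    omega
  -- alternation of extension letters
  have alt : ∀ p : ℤ, Ew x n p i0 → x (nxt p + (n : ℤ)) ≠ x (p + (n : ℤ)) := by
    intro p hp heq
    set q := nxt p with hq
    have hqmem := nxt_mem p
    set d := nxt p - p with hd
    have hd1 : 1 ≤ d := by have := nxt_gt p; omega
    have edn : ((d.toNat : ℕ) : ℤ) = d := Int.toNat_of_nonneg (by omega)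
    have hrun : ∀ t : ℤ, p ≤ t → t < p + (((d + (n : ℤ)).toNat : ℕ) : ℤ) →
        x t = x (t + ((d.toNat : ℕ) : ℤ)) := by
      intro t h1 h2
      have edn2 : (((d + (n : ℤ)).toNat : ℕ) : ℤ) = d + (n : ℤ) := Int.toNat_of_nonneg (by omega)
      have hu : (((t - p).toNat : ℕ) : ℤ) = t - p := Int.toNat_of_nonneg (by omega)
      have := pair_full p q hp hqmem heq.symm (t - p).toNat (by omega)
      have e1 : p + (((t - p).toNat : ℕ) : ℤ) = t := by omega
      have e2 : q + (((t - p).toNat : ℕ) : ℤ) = t + ((d.toNat : ℕ) : ℤ) := by omega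
      rw [e1, e2] at this
      exact this
    have hL := runbound hw hap d.toNat (by omega) p (d + (n : ℤ)).toNat hrun
    have : (((d + (n : ℤ)).toNat : ℕ) : ℤ) = d + (n : ℤ) := Int.toNat_of_nonneg (by omega)
    omega
  -- the two letters
  set a := x (i0 + (n : ℤ)) with ha
  set b := x (j0 + (n : ℤ)) with hb
  have hj0T : Ew x n j0 i0 := hE0.symm
  have hi0T : Ew x n i0 i0 := Ew.refl x n i0
  set U := nxt i0 - i0 with hU
  set V := nxt j0 - j0 with hV
  have gap_a : ∀ p : ℤ, Ew x n p i0 → x (p + (n : ℤ)) = a → nxt p - p = U :=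
    fun p hp hl => gap_eq p i0 hp hi0T hl
  have gap_b : ∀ p : ℤ, Ew x n p i0 → x (p + (n : ℤ)) = b → nxt p - p = V :=
    fun p hp hl => gap_eq p j0 hp hj0T hl
  set P : ℤ := U + V with hP
  have hU1 : 1 ≤ U := by have := nxt_gt i0; omega
  have hV1 : 1 ≤ V := by have := nxt_gt j0; omega
  -- two-step letter equality and distance
  have DP : ∀ p : ℤ, Ew x n p i0 → nxt (nxt p) - p = P ∧
      x (nxt (nxt p) + (n : ℤ)) = x (p + (n : ℤ)) := by
    intro p hp
    have hpn := nxt_mem p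
    have hpnn := nxt_mem (nxt p)
    have l1 := hletters p hp
    have l2 := hletters (nxt p) hpn
    have l3 := hletters (nxt (nxt p)) hpnn
    have a1 := alt p hp
    have a2 := alt (nxt p) hpn
    rcases l1 with e1 | e1
    · have e2' : x (nxt p + (n : ℤ)) = b := by
        rcases l2 with e2 | e2
        · exact absurd (e2.trans e1.symm) a1
        · exact e2
      have g1 : nxt p - p = U := gap_a p hp e1
      have g2 : nxt (nxt p) - nxt p = V := gap_b (nxt p) hpn e2'
      have e3' : x (nxt (nxt p) + (n : ℤ)) = a := by
        rcases l3 with e3 | e3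
        · exact e3
        · exact absurd (e3.trans e2'.symm) a2
      exact ⟨by omega, by rw [e3', e1]⟩
    · have e2' : x (nxt p + (n : ℤ)) = a := by
        rcases l2 with e2 | e2
        · exact e2
        · exact absurd (e2.trans e1.symm) a1
      have g1 : nxt p - p = V := gap_b p hp e1
      have g2 : nxt (nxt p) - nxt p = U := gap_a (nxt p) hpn e2'
      have e3' : x (nxt (nxt p) + (n : ℤ)) = b := by
        rcases l3 with e3 | e3
        · exact absurd (e3.trans e2'.symm) a2
        · exact e3
      exact ⟨by omega, by rw [e3', e1]⟩
  -- global periodicity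
  have period : ∀ t : ℤ, x t = x (t + P) := by
    intro t
    obtain ⟨p, hp, hpt, htn⟩ := cover t
    obtain ⟨hdist, hlet⟩ := DP p hp
    have hq := nxt_mem (nxt p)
    have hu : (((t - p).toNat : ℕ) : ℤ) = t - p := Int.toNat_of_nonneg (by omega)
    have hgt := nxt_gt p
    have hbnd : (((t - p).toNat : ℕ) : ℤ) < (n : ℤ) + (nxt p - p) := by omega
    have := pair_full p (nxt (nxt p)) hp hq hlet.symm (t - p).toNat hbnd
    have e1 : p + (((t - p).toNat : ℕ) : ℤ) = t := by omega
    have e2 : nxt (nxt p) + (((t - p).toNat : ℕ) : ℤ) = t + P := by omega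
    rw [e1, e2] at this
    exact this
  have hPP : 1 ≤ P.toNat := by omega
  obtain ⟨t, ht⟩ := hap P.toNat hPP
  apply ht
  have hcast : ((P.toNat : ℕ) : ℤ) = P := Int.toNat_of_nonneg (by omega)
  rw [hcast]
  exact period t

end SAux
namespace SAux

variable {A : Type*}

lemma all_periodic {X : Set (ℤ → A)} (hX : IsShiftSpace X) {Γ : Set ℤ}
    (hfin : Γ.Finite) (hatt : IsAttractorX X Γ) : ∀ x ∈ X, PurelyPeriodicZ x := by
  intro x hx
  rcases Set.eq_empty_or_nonempty Γ with rfl | hne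
  · exfalso
    have hfact : IsFactorZ x (subwordZ x 0 1) := ⟨0, by unfold occursAt; rw [subwordZ_length]⟩
    obtain ⟨i, _, p, hp, _⟩ := hatt x hx _ (subwordZ_ne_nil le_rfl) hfact
    exact absurd hp (Set.notMem_empty p)
  · have hne' : hfin.toFinset.Nonempty := by
      rwa [Set.Finite.toFinset_nonempty]
    set m := hfin.toFinset.min' hne' with hm
    set M := hfin.toFinset.max' hne' with hM
    have hmM : m ≤ M := Finset.min'_le _ _ (hfin.toFinset.max'_mem hne')
    have hΓ : ∀ p ∈ Γ, m ≤ p ∧ p ≤ M := by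
      intro p hp
      have hp' : p ∈ hfin.toFinset := hfin.mem_toFinset.mpr hp
      exact ⟨Finset.min'_le _ _ hp', Finset.le_max' _ _ hp'⟩
    exact wh_periodic x _ (wh_of_attractor hX.2 hatt hmM hΓ hx)

lemma periodic_multiple {z : ℤ → A} {p : ℕ} (hp : ∀ n : ℤ, z n = z (n + (p : ℤ))) :
    ∀ (k : ℕ) (t : ℤ), z t = z (t + (k : ℤ) * (p : ℤ)) ∧ z t = z (t - (k : ℤ) * (p : ℤ)) := by
  intro k
  induction k with
  | zero => intro t; simp
  | succ k ih =>
      intro t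
      constructor
      · have h1 := (ih t).1
        have h2 := hp (t + (k : ℤ) * (p : ℤ))
        rw [h1, h2]
        congr 1
        push_cast
        ring
      · have h1 := (ih (t - (p : ℤ))).2
        have h2 := hp (t - (p : ℤ))
        have e : t - (p : ℤ) + (p : ℤ) = t := by ring
        rw [e] at h2
        rw [← h2] at *
        rw [h1]
        congr 1
        push_cast
        ring

lemma half_agree {z z' : ℤ → A} (hz : PurelyPeriodicZ z) (hz' : PurelyPeriodicZ z')
    (side : (∀ t : ℤ, t < 0 → z t = z' t) ∨ (∀ t : ℤ, 0 < t → z t = z' t)) : z = z' := by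
  obtain ⟨p, hp1, hp⟩ := hz
  obtain ⟨q, hq1, hq⟩ := hz'
  have hpq : (1 : ℤ) ≤ ((p * q : ℕ) : ℤ) := by
    have : 1 ≤ p * q := Nat.one_le_iff_ne_zero.mpr (by positivity)
    omega
  have hzpq : ∀ n : ℤ, z n = z (n + ((p * q : ℕ) : ℤ)) := by
    intro n
    have h1 := (periodic_multiple hp q n).1
    rw [h1]
    all_goals (congr 1; try push_cast; try ring)
  have hz'pq : ∀ n : ℤ, z' n = z' (n + ((p * q : ℕ) : ℤ)) := by
    intro n
    have h1 := (periodic_multiple hq p n).1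
    rw [h1]
    all_goals (congr 1; try push_cast; try ring)
  funext t
  rcases side with hL | hR
  · set k : ℕ := (t + 1).toNat with hk
    have hkey : t - (k : ℤ) * ((p * q : ℕ) : ℤ) < 0 := by
      rcases (by omega : (k : ℤ) ≥ t + 1 ∨ (k : ℤ) = 0) with h1 | h1
      · nlinarith
      · rw [h1, zero_mul, sub_zero]; omega
    have e1 := (periodic_multiple hzpq k t).2
    have e2 := (periodic_multiple hz'pq k t).2
    rw [e1, e2]
    exact hL _ hkey
  · set k : ℕ := (1 - t).toNat with hk
    have hkey : 0 < t + (k : ℤ) * ((p * q : ℕ) : ℤ) := by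
      rcases (by omega : (k : ℤ) ≥ 1 - t ∨ (k : ℤ) = 0) with h1 | h1
      · nlinarith
      · rw [h1, zero_mul, add_zero]; omega
    have e1 := (periodic_multiple hzpq k t).1
    have e2 := (periodic_multiple hz'pq k t).1
    rw [e1, e2]
    exact hR _ hkey

end SAux
namespace SAux

variable {A : Type*}

lemma ultra_const (V : Ultrafilter ℕ) {B : Type*} [Finite B] (g : ℕ → B) :
    ∃ b : B, {i | g i = b} ∈ V := by
  by_contra hc
  push_neg at hc
  have h1 : ∀ b : B, {i | g i = b}ᶜ ∈ V := fun b => Ultrafilter.compl_mem_iff_notMem.mpr (hc b)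
  have h2 : (⋂ b : B, {i | g i = b}ᶜ) ∈ V := Filter.iInter_mem.mpr h1
  have h3 : (⋂ b : B, {i : ℕ | g i = b}ᶜ) = ∅ := by
    ext i
    simp
  rw [h3] at h2
  exact Filter.empty_notMem (V : Filter ℕ) h2

lemma mem_of_closed {X : Set (ℤ → A)}
    (hcl : @IsClosed _ (@Pi.topologicalSpace ℤ (fun _ => A) (fun _ => ⊥)) X)
    (z : ℤ → A) (hz : ∀ F : Finset ℤ, ∃ y ∈ X, ∀ i ∈ F, y i = z i) : z ∈ X := by
  letI : TopologicalSpace A := ⊥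
  by_contra hnz
  have hop : IsOpen Xᶜ := hcl.isOpen_compl
  rw [isOpen_pi_iff] at hop
  obtain ⟨I, u, hiu, hsub⟩ := hop z hnz
  obtain ⟨y, hyX, hy⟩ := hz I
  have hmem : y ∈ (I : Set ℤ).pi u := by
    rw [Set.mem_pi]
    intro i hi
    rw [hy i (by exact_mod_cast hi)]
    exact (hiu i (by exact_mod_cast hi)).2
  exact (hsub hmem) hyX

lemma finite_of_periodic [Fintype A] {X : Set (ℤ → A)} (hX : IsShiftSpace X)
    (hper : ∀ x ∈ X, PurelyPeriodicZ x) : X.Finite := by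
  by_contra hinf
  -- restrictions to finite windows are never injective
  have hnoninj : ∀ n : ℕ, ∃ x ∈ X, ∃ y ∈ X, x ≠ y ∧ ∀ t : ℤ, t.natAbs ≤ n → x t = y t := by
    intro n
    by_contra hc
    push_neg at hc
    apply hinf
    have hinj : Set.InjOn (fun (x : ℤ → A) => fun t : Set.Icc (-(n : ℤ)) (n : ℤ) => x t) X := by
      intro u hu v hv he
      by_contra hne
      obtain ⟨t, ht, hxy⟩ := hc u hu v hv hne
      have hmem : t ∈ Set.Icc (-(n : ℤ)) (n : ℤ) := by
        constructor <;> omega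
      have := congrFun he ⟨t, hmem⟩
      exact hxy this
    exact Set.Finite.of_finite_image (Set.toFinite _) hinj
  -- produce asymptotic pairs
  have pairs : ∀ n : ℕ, ∃ z ∈ X, ∃ z' ∈ X, z 0 ≠ z' 0 ∧
      ((∀ t : ℤ, -(n : ℤ) ≤ t → t ≤ -1 → z t = z' t) ∨
       (∀ t : ℤ, 1 ≤ t → t ≤ (n : ℤ) → z t = z' t)) := by
    intro n
    obtain ⟨u, hu, v, hv, hne, hagree⟩ := hnoninj n
    have hexdiff : ∃ t : ℤ, u t ≠ v t := Function.ne_iff.mp hne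
    have hex : ∃ m : ℕ, ∃ t : ℤ, t.natAbs = m ∧ u t ≠ v t := by
      obtain ⟨t, ht⟩ := hexdiff
      exact ⟨t.natAbs, t, rfl, ht⟩
    set m0 := Nat.find hex with hm0
    obtain ⟨t0, ht0abs, ht0ne⟩ := Nat.find_spec hex
    have hmin : ∀ t : ℤ, t.natAbs < m0 → u t = v t := by
      intro t htl
      by_contra hne'
      exact Nat.find_min hex htl ⟨t, rfl, hne'⟩
    have hm0n : n < m0 := by
      rcases Nat.lt_or_ge n m0 with h' | h'
      · exact h'
      · exact absurd (hagree t0 (by omega)) ht0ne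
    refine ⟨shiftZ t0 u, shift_mem hX.2 _ hu, shiftZ t0 v, shift_mem hX.2 _ hv, ?_, ?_⟩
    · show u (0 + t0) ≠ v (0 + t0)
      simpa using ht0ne
    · rcases le_or_gt 0 t0 with hpos | hneg
      · left
        intro t h1 h2
        show u (t + t0) = v (t + t0)
        apply hmin
        omega
      · right
        intro t h1 h2
        show u (t + t0) = v (t + t0)
        apply hmin
        omega
  choose z hzX z' hz'X hne0 hside using pairs
  -- an ultrafilter extending the cofinite filter
  haveI : (Filter.cofinite : Filter ℕ).NeBot := Filter.cofinite_neBot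
  set V : Ultrafilter ℕ := Ultrafilter.of Filter.cofinite with hV
  have hVle : (V : Filter ℕ) ≤ Filter.cofinite := Ultrafilter.of_le _
  have hcof : ∀ c : ℕ, {i : ℕ | c ≤ i} ∈ V := by
    intro c
    apply hVle
    rw [Filter.mem_cofinite]
    have : {i : ℕ | c ≤ i}ᶜ = {i : ℕ | i < c} := by
      ext i
      simp only [Set.mem_compl_iff, Set.mem_setOf_eq, not_le]
    rw [this]
    exact Set.finite_lt_nat c
  -- ultrafilter limits
  have hZ : ∀ t : ℤ, ∃ a : A, {i | z i t = a} ∈ V := fun t => ultra_const V _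
  have hZ' : ∀ t : ℤ, ∃ a : A, {i | z' i t = a} ∈ V := fun t => ultra_const V _
  choose Z hZspec using hZ
  choose Z' hZ'spec using hZ'
  have hZX : Z ∈ X := by
    apply mem_of_closed hX.1
    intro F
    have hS : (⋂ t ∈ F, {i : ℕ | z i t = Z t}) ∈ V :=
      (Filter.biInter_mem F.finite_toSet).mpr fun t _ => hZspec t
    obtain ⟨i, hi⟩ := Filter.nonempty_of_mem hS
    simp only [Set.mem_iInter, Set.mem_setOf_eq] at hi
    exact ⟨z i, hzX i, fun t ht => hi t ht⟩
  have hZ'X : Z' ∈ X := by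
    apply mem_of_closed hX.1
    intro F
    have hS : (⋂ t ∈ F, {i : ℕ | z' i t = Z' t}) ∈ V :=
      (Filter.biInter_mem F.finite_toSet).mpr fun t _ => hZ'spec t
    obtain ⟨i, hi⟩ := Filter.nonempty_of_mem hS
    simp only [Set.mem_iInter, Set.mem_setOf_eq] at hi
    exact ⟨z' i, hz'X i, fun t ht => hi t ht⟩
  have hZne : Z 0 ≠ Z' 0 := by
    have hS : ({i : ℕ | z i 0 = Z 0} ∩ {i | z' i 0 = Z' 0}) ∈ V :=
      Filter.inter_mem (hZspec 0) (hZ'spec 0)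
    obtain ⟨i, hi1, hi2⟩ := Filter.nonempty_of_mem hS
    rw [← hi1, ← hi2]
    exact hne0 i
  -- side selection
  set L : Set ℕ := {i | ∀ t : ℤ, -(i : ℤ) ≤ t → t ≤ -1 → z i t = z' i t} with hL
  set R : Set ℕ := {i | ∀ t : ℤ, 1 ≤ t → t ≤ (i : ℤ) → z i t = z' i t} with hR
  have hLR : L ∪ R ∈ V := by
    have huniv : L ∪ R = Set.univ := by
      ext i
      simp only [Set.mem_union, Set.mem_univ, iff_true]
      exact hside i
    rw [huniv]
    exact Filter.univ_mem
  have hside' : L ∈ V ∨ R ∈ V := (Ultrafilter.union_mem_iff).mp hLR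
  have hagree : (∀ t : ℤ, t < 0 → Z t = Z' t) ∨ (∀ t : ℤ, 0 < t → Z t = Z' t) := by
    rcases hside' with hL' | hR'
    · left
      intro t ht
      have hS : (L ∩ ({i | z i t = Z t} ∩ ({i | z' i t = Z' t} ∩ {i : ℕ | t.natAbs ≤ i}))) ∈ V :=
        Filter.inter_mem hL' (Filter.inter_mem (hZspec t)
          (Filter.inter_mem (hZ'spec t) (hcof t.natAbs)))
      obtain ⟨i, hiL, hi1, hi2, hi3⟩ := Filter.nonempty_of_mem hS
      rw [← hi1, ← hi2]
      apply hiL <;> simp only [Set.mem_setOf_eq] at hi3 ⊢ <;> omega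
    · right
      intro t ht
      have hS : (R ∩ ({i | z i t = Z t} ∩ ({i | z' i t = Z' t} ∩ {i : ℕ | t.natAbs ≤ i}))) ∈ V :=
        Filter.inter_mem hR' (Filter.inter_mem (hZspec t)
          (Filter.inter_mem (hZ'spec t) (hcof t.natAbs)))
      obtain ⟨i, hiR, hi1, hi2, hi3⟩ := Filter.nonempty_of_mem hS
      rw [← hi1, ← hi2]
      apply hiR <;> simp only [Set.mem_setOf_eq] at hi3 ⊢ <;> omega
  have := half_agree (hper Z hZX) (hper Z' hZ'X) hagree
  rw [this] at hZne
  exact hZne rfl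

end SAux
namespace SAux

variable {A : Type*}

lemma periodic_intmul {z : ℤ → A} {p : ℕ} (hp : ∀ n : ℤ, z n = z (n + (p : ℤ)))
    (q u : ℤ) : z u = z (u + q * (p : ℤ)) := by
  rcases le_or_gt 0 q with hq | hq
  · have h1 := (periodic_multiple hp q.toNat u).1
    have e : ((q.toNat : ℕ) : ℤ) = q := Int.toNat_of_nonneg hq
    rw [e] at h1
    exact h1
  · have h1 := (periodic_multiple hp (-q).toNat u).2
    have e : (((-q).toNat : ℕ) : ℤ) = -q := Int.toNat_of_nonneg (by omega)
    rw [e] at h1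
    rw [h1]
    congr 1
    ring

lemma decomp {X : Set (ℤ → A)} (hfin : X.Finite)
    (hper : ∀ x ∈ X, PurelyPeriodicZ x) (hshift : ∀ k : ℤ, ∀ x ∈ X, shiftZ k x ∈ X) :
    ∃ (N : ℕ) (f : Fin N → (ℤ → A)), (∀ i, PurelyPeriodicZ (f i)) ∧
      X = ⋃ i : Fin N, {y : ℤ → A | ∃ k : ℤ, y = shiftZ k (f i)} := by
  classical
  set F := hfin.toFinset with hF
  have hmemX : ∀ u : {x // x ∈ F}, (u : ℤ → A) ∈ X := by
    intro u
    have h2 := u.2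
    exact (Set.Finite.mem_toFinset hfin).mp h2
  refine ⟨F.card, fun i => (F.equivFin.symm i : {x // x ∈ F}), ?_, ?_⟩
  · intro i
    exact hper _ (hmemX _)
  · apply Set.Subset.antisymm
    · intro x hx
      have hxF : x ∈ F := (Set.Finite.mem_toFinset hfin).mpr hx
      apply Set.mem_iUnion.mpr
      refine ⟨F.equivFin ⟨x, hxF⟩, ⟨0, ?_⟩⟩
      have e : (F.equivFin.symm (F.equivFin ⟨x, hxF⟩)) = ⟨x, hxF⟩ := Equiv.symm_apply_apply _ _
      show x = shiftZ 0 ((F.equivFin.symm (F.equivFin ⟨x, hxF⟩) : {x // x ∈ F}) : ℤ → A)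
      rw [shiftZ_zero, e]
    · intro y hy
      obtain ⟨i, k, rfl⟩ := Set.mem_iUnion.mp hy
      exact hshift k _ (hmemX _)

lemma easy_dir {X : Set (ℤ → A)} {N : ℕ} {f : Fin N → (ℤ → A)}
    (hf : ∀ i, PurelyPeriodicZ (f i))
    (hXeq : X = ⋃ i : Fin N, {y : ℤ → A | ∃ k : ℤ, y = shiftZ k (f i)}) :
    ∃ Γ : Set ℤ, Γ.Finite ∧ IsAttractorX X Γ := by
  choose p hp1 hp2 using hf
  classical
  set P : ℕ := (Finset.univ : Finset (Fin N)).sup p with hP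
  refine ⟨Set.Icc 0 ((P : ℤ) - 1), Set.finite_Icc _ _, ?_⟩
  intro x hx w hwne hwf
  rw [hXeq] at hx
  obtain ⟨i, hiset⟩ := Set.mem_iUnion.mp hx
  obtain ⟨k, rfl⟩ := hiset
  set y := shiftZ k (f i) with hy
  have hyper : ∀ t : ℤ, y t = y (t + (p i : ℤ)) := by
    intro t
    show f i (t + k) = f i (t + (p i : ℤ) + k)
    rw [hp2 i (t + k)]
    congr 1
    ring
  obtain ⟨i0, hocc⟩ := hwf
  have hpi : (0 : ℤ) < ((p i : ℕ) : ℤ) := by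
    have := hp1 i
    omega
  set r := i0 % ((p i : ℕ) : ℤ) with hr
  have hr0 : 0 ≤ r := Int.emod_nonneg i0 (by omega)
  have hrlt : r < ((p i : ℕ) : ℤ) := Int.emod_lt_of_pos i0 hpi
  have hdiv : ((p i : ℕ) : ℤ) * (i0 / ((p i : ℕ) : ℤ)) + r = i0 := Int.mul_ediv_add_emod i0 _
  have hshifteq : ∀ t : ℕ, y (r + (t : ℤ)) = y (i0 + (t : ℤ)) := by
    intro t
    have h1 := periodic_intmul hyper (i0 / ((p i : ℕ) : ℤ)) (r + (t : ℤ))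
    rw [h1]
    congr 1
    have : r + (t : ℤ) + i0 / ((p i : ℕ) : ℤ) * ((p i : ℕ) : ℤ) =
        (((p i : ℕ) : ℤ) * (i0 / ((p i : ℕ) : ℤ)) + r) + (t : ℤ) := by ring
    rw [this, hdiv]
  have hoccr : occursAt y w r := by
    unfold occursAt at hocc ⊢
    have h2 : subwordZ y r w.length = subwordZ y i0 w.length :=
      subword_eq_iff.mpr fun t _ => hshifteq t
    rw [h2, hocc]
  have hlen : 1 ≤ w.length := List.length_pos_iff.mpr hwne
  have hpiP : p i ≤ P := Finset.le_sup (Finset.mem_univ i)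
  refine ⟨r, hoccr, r, ?_, le_refl r, by omega⟩
  constructor
  · exact hr0
  · omega

end SAux
/-- A shift space admits a finite string attractor iff it is a finite union of
orbits of purely periodic words; in particular such a shift space is finite. -/
theorem shift_space_finite_attractor {A : Type*} [Fintype A] (X : Set (ℤ → A))
    (hX : IsShiftSpace X) :
    ((∃ Γ : Set ℤ, Γ.Finite ∧ IsAttractorX X Γ) ↔
      ∃ (N : ℕ) (f : Fin N → (ℤ → A)), (∀ i, PurelyPeriodicZ (f i)) ∧
        X = ⋃ i : Fin N, {y : ℤ → A | ∃ k : ℤ, y = shiftZ k (f i)}) ∧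
    ((∃ Γ : Set ℤ, Γ.Finite ∧ IsAttractorX X Γ) → X.Finite) := by
  constructor
  · constructor
    · rintro ⟨Γ, hfin, hatt⟩
      have hper := SAux.all_periodic hX hfin hatt
      have hXfin := SAux.finite_of_periodic hX hper
      exact SAux.decomp hXfin hper (fun k x hx => SAux.shift_mem hX.2 k hx)
    · rintro ⟨N, f, hf, hXeq⟩
      exact SAux.easy_dir hf hXeq
  · rintro ⟨Γ, hfin, hatt⟩
    exact SAux.finite_of_periodic hX (SAux.all_periodic hX hfin hatt)
end

section
/- Let X be a minimal shift space and let η : ℕ → ℕ be a non-decreasing function with η(n) → ∞ as n → ∞. Then X has a string attractor Γ such that #(Γ ∩ [−n, n]) ≤ η(n) for all n ∈ ℕ. -/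
open scoped ENat Classical

section AttractorHelpers

variable {A : Type*}

theorem subwordZ_eq (x : ℤ → A) (i : ℤ) (n : ℕ) :
    subwordZ x i n = (List.range n).map (fun j : ℕ => x (i + (j : ℤ))) := by
  unfold subwordZ
  simp only [List.pure_def, List.bind_eq_flatMap]
  rw [← List.map_eq_flatMap, List.map_map]
  rfl

theorem subwordZ_length' (x : ℤ → A) (i : ℤ) (n : ℕ) : (subwordZ x i n).length = n := by
  rw [subwordZ_eq]
  simp

theorem subwordZ_shift' (k : ℤ) (y : ℤ → A) (i : ℤ) (n : ℕ) :
    subwordZ (shiftZ k y) i n = subwordZ y (i + k) n := by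
  rw [subwordZ_eq, subwordZ_eq]
  unfold shiftZ
  apply List.map_congr_left
  intro j _
  congr 1
  ring

theorem occursAt_shift' (k : ℤ) (y : ℤ → A) (w : List A) (i : ℤ) :
    occursAt (shiftZ k y) w i ↔ occursAt y w (i + k) := by
  unfold occursAt
  rw [subwordZ_shift']

theorem isFactorZ_shift' (k : ℤ) (y : ℤ → A) (w : List A) :
    IsFactorZ (shiftZ k y) w ↔ IsFactorZ y w := by
  constructor
  · rintro ⟨i, h⟩
    exact ⟨i + k, (occursAt_shift' k y w i).mp h⟩
  · rintro ⟨i, h⟩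
    refine ⟨i - k, ?_⟩
    rw [occursAt_shift']
    simpa using h

theorem shiftZ_shiftZ' (a b : ℤ) (x : ℤ → A) : shiftZ a (shiftZ b x) = shiftZ (a + b) x := by
  funext i
  simp [shiftZ, add_assoc]

theorem shiftZ_zero' (x : ℤ → A) : shiftZ 0 x = x := by
  funext i
  simp [shiftZ]

theorem shift_mem' {X : Set (ℤ → A)} (hX : shiftZ 1 '' X = X) :
    ∀ (k : ℤ) (x : ℤ → A), x ∈ X → shiftZ k x ∈ X := by
  have h1 : ∀ x ∈ X, shiftZ 1 x ∈ X := fun x hx => hX ▸ ⟨x, hx, rfl⟩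
  have hm1 : ∀ x ∈ X, shiftZ (-1) x ∈ X := by
    intro x hx
    conv at hx => rw [← hX]
    obtain ⟨x', hx', rfl⟩ := hx
    rw [shiftZ_shiftZ']
    simpa [shiftZ_zero'] using hx'
  intro k
  induction k using Int.induction_on with
  | zero => intro x hx; simpa [shiftZ_zero'] using hx
  | succ n ih =>
    intro x hx
    have := h1 _ (ih x hx)
    rw [shiftZ_shiftZ'] at this
    have he : (1 : ℤ) + n = n + 1 := by ring
    rwa [he] at this
  | pred n ih =>
    intro x hx
    have := hm1 _ (ih x hx)
    rw [shiftZ_shiftZ'] at this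
    have he : (-1 : ℤ) + (-n) = -(n : ℤ) - 1 := by ring
    rwa [he] at this

theorem subwordZ_congr' {y z : ℤ → A} {i : ℤ} {n : ℕ}
    (h : ∀ c : ℤ, i ≤ c → c < i + n → y c = z c) :
    subwordZ y i n = subwordZ z i n := by
  rw [subwordZ_eq, subwordZ_eq]
  apply List.map_congr_left
  intro j hj
  rw [List.mem_range] at hj
  exact h _ (by omega) (by omega)

theorem occursAt_iff' (y : ℤ → A) (w : List A) (i : ℤ) :
    occursAt y w i ↔ ∀ j : ℕ, j < w.length → w[j]? = some (y (i + (j : ℤ))) := by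
  unfold occursAt
  constructor
  · intro h j hj
    rw [← h]
    rw [subwordZ_eq, List.getElem?_map, List.getElem?_range hj]
    rfl
  · intro h
    apply List.ext_getElem?
    intro j
    by_cases hj : j < w.length
    · rw [h j hj]
      rw [subwordZ_eq, List.getElem?_map, List.getElem?_range hj]
      rfl
    · rw [List.getElem?_eq_none (by simpa [subwordZ_length'] using Nat.le_of_not_lt hj),
        List.getElem?_eq_none (Nat.le_of_not_lt hj)]

theorem isClosed_avoid' [TopologicalSpace A] [DiscreteTopology A]
    {X : Set (ℤ → A)} (hcl : IsClosed X) (w : List A) :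
    IsClosed {y : ℤ → A | y ∈ X ∧ ¬ IsFactorZ y w} := by
  have hrw : {y : ℤ → A | y ∈ X ∧ ¬ IsFactorZ y w}
      = X ∩ ⋂ i : ℤ, {y : ℤ → A | occursAt y w i}ᶜ := by
    ext y
    simp [IsFactorZ, Set.mem_iInter, not_exists]
  rw [hrw]
  refine hcl.inter (isClosed_iInter fun i => ?_)
  have hopen : IsOpen {y : ℤ → A | occursAt y w i} := by
    have hset : {y : ℤ → A | occursAt y w i}
        = ⋂ j ∈ Finset.range w.length,
            (fun y : ℤ → A => y (i + (j : ℤ))) ⁻¹' {a | w[j]? = some a} := by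
      ext y
      simp only [Set.mem_setOf_eq, Set.mem_iInter, Set.mem_preimage, Finset.mem_range]
      rw [occursAt_iff']
    rw [hset]
    exact isOpen_biInter_finset fun j _ =>
      (continuous_apply _).isOpen_preimage _ (isOpen_discrete _)
  exact hopen.isClosed_compl

theorem mem_of_cylinder' [TopologicalSpace A] [DiscreteTopology A]
    {X : Set (ℤ → A)} (hcl : IsClosed X) (z : ℤ → A)
    (h : ∀ F : Finset ℤ, ∃ y ∈ X, ∀ c ∈ F, y c = z c) : z ∈ X := by
  have hz : z ∈ closure X := by
    rw [mem_closure_iff_nhds]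
    intro U hU
    rw [nhds_pi, Filter.mem_pi] at hU
    obtain ⟨I, hIf, t, ht, hsub⟩ := hU
    obtain ⟨y, hyX, hy⟩ := h hIf.toFinset
    refine ⟨y, hsub ?_, hyX⟩
    intro c hc
    have h1 := ht c
    rw [nhds_discrete, Filter.mem_pure] at h1
    rw [hy c (hIf.mem_toFinset.mpr hc)]
    exact h1
  rwa [hcl.closure_eq] at hz

theorem ultralimit' [TopologicalSpace A] [DiscreteTopology A] [Finite A]
    {X : Set (ℤ → A)} (hcl : IsClosed X)
    (zs : ℕ → ℤ → A) (hzs : ∀ N, zs N ∈ X) :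
    ∃ z ∈ X, ∀ (F : Finset ℤ) (M : ℕ), ∃ N, M ≤ N ∧ ∀ c ∈ F, zs N c = z c := by
  classical
  let U : Ultrafilter ℕ := Ultrafilter.of Filter.atTop
  have hUle : (U : Filter ℕ) ≤ Filter.atTop := Ultrafilter.of_le _
  have hA : ∀ c : ℤ, ∃ a : A, {N | zs N c = a} ∈ U := by
    intro c
    by_contra hcon
    push_neg at hcon
    have h' : ∀ a : A, {N | zs N c = a}ᶜ ∈ U :=
      fun a => Ultrafilter.compl_mem_iff_notMem.mpr (hcon a)
    have hmem : (⋂ a : A, {N | zs N c = a}ᶜ) ∈ U := Filter.iInter_mem.mpr h'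
    have he : (⋂ a : A, {N | zs N c = a}ᶜ) = ∅ := by
      ext N
      simp
    rw [he] at hmem
    exact Filter.empty_notMem (U : Filter ℕ) hmem
  choose z hz using hA
  have key : ∀ (F : Finset ℤ) (M : ℕ), ∃ N, M ≤ N ∧ ∀ c ∈ F, zs N c = z c := by
    intro F M
    have h1 : {N | ∀ c ∈ F, zs N c = z c} ∈ U := by
      have hI : {N | ∀ c ∈ F, zs N c = z c} = ⋂ c ∈ F, {N | zs N c = z c} := by
        ext N
        simp
      rw [hI]
      exact (Filter.biInter_mem F.finite_toSet).mpr fun c _ => hz c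
    have h2 : {N | M ≤ N} ∈ U := hUle (Filter.mem_atTop M)
    obtain ⟨N, hN⟩ := Filter.nonempty_of_mem (Filter.inter_mem h2 h1)
    exact ⟨N, hN.1, hN.2⟩
  refine ⟨z, ?_, key⟩
  apply mem_of_cylinder' hcl
  intro F
  obtain ⟨N, _, h⟩ := key F 0
  exact ⟨zs N, hzs N, h⟩

theorem lang' {X : Set (ℤ → A)} (hX : MinimalShift X)
    (w : List A) (hw : ∃ x ∈ X, IsFactorZ x w) : ∀ y ∈ X, IsFactorZ y w := by
  obtain ⟨x, hxX, hxf⟩ := hw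
  set Y : Set (ℤ → A) := {y | y ∈ X ∧ ¬ IsFactorZ y w} with hY
  have hYshift : IsShiftSpace Y := by
    constructor
    · letI : TopologicalSpace A := ⊥
      haveI : DiscreteTopology A := ⟨rfl⟩
      exact isClosed_avoid' hX.1.1 w
    · ext y
      constructor
      · rintro ⟨y', ⟨hy'X, hy'f⟩, rfl⟩
        refine ⟨shift_mem' hX.1.2 1 y' hy'X, ?_⟩
        rw [isFactorZ_shift']
        exact hy'f
      · rintro ⟨hyX, hyf⟩
        have hy' : y ∈ shiftZ 1 '' X := hX.1.2.symm ▸ hyX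
        obtain ⟨y', hy', rfl⟩ := hy'
        refine ⟨y', ⟨hy', ?_⟩, rfl⟩
        rw [isFactorZ_shift'] at hyf
        exact hyf
  rcases hX.2 Y (fun y hy => hy.1) hYshift with h | h
  · intro y hy
    by_contra hf
    have hmem : y ∈ Y := ⟨hy, hf⟩
    rw [h] at hmem
    exact hmem
  · exact absurd hxf (h ▸ hxX : x ∈ Y).2

theorem exists_window' [Fintype A] {X : Set (ℤ → A)} (hX : MinimalShift X)
    (w : List A) (hw : ∀ y ∈ X, IsFactorZ y w) :
    ∃ N : ℕ, ∀ y ∈ X, ∀ i : ℤ, ∃ j : ℤ, i ≤ j ∧ j < i + (N : ℤ) ∧ occursAt y w j := by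
  classical
  by_contra hcon
  push_neg at hcon
  choose y hyX i hno using hcon
  set zs : ℕ → ℤ → A := fun N => shiftZ (i (2 * N) + N) (y (2 * N)) with hzs
  have hzsX : ∀ N, zs N ∈ X := fun N => shift_mem' hX.1.2 _ _ (hyX (2 * N))
  have hzno : ∀ N : ℕ, ∀ j : ℤ, -(N : ℤ) ≤ j → j < N → ¬ occursAt (zs N) w j := by
    intro N j h1 h2 hocc
    rw [show zs N = shiftZ (i (2 * N) + N) (y (2 * N)) from rfl, occursAt_shift'] at hocc
    exact hno (2 * N) (j + (i (2 * N) + N)) (by omega) (by omega) hocc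
  letI : TopologicalSpace A := ⊥
  haveI : DiscreteTopology A := ⟨rfl⟩
  obtain ⟨z, hzX, hkey⟩ := ultralimit' hX.1.1 zs hzsX
  have hzno' : ∀ j : ℤ, ¬ occursAt z w j := by
    intro j hocc
    obtain ⟨N, hN, hagree⟩ := hkey ((Finset.range w.length).image (fun t : ℕ => j + (t : ℤ)))
      (j.natAbs + w.length + 1)
    have heq : subwordZ (zs N) j w.length = subwordZ z j w.length := by
      apply subwordZ_congr'
      intro c hc1 hc2
      apply hagree
      simp only [Finset.mem_image, Finset.mem_range]
      exact ⟨(c - j).toNat, by omega, by omega⟩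
    have hocc' : occursAt (zs N) w j := by
      unfold occursAt at hocc ⊢
      rw [heq]
      exact hocc
    exact hzno N j (by omega) (by omega) hocc'
  obtain ⟨j, hj⟩ := hw z hzX
  exact hzno' j hj

theorem exists_windowAll' [Fintype A] {X : Set (ℤ → A)} (hX : MinimalShift X) (L : ℕ) :
    ∃ N : ℕ, ∀ y ∈ X, ∀ w : List A, w.length ≤ L → IsFactorZ y w →
      ∀ i : ℤ, ∃ j : ℤ, i ≤ j ∧ j < i + (N : ℤ) ∧ occursAt y w j := by
  classical
  have hperw : ∀ w : List A, (∃ x ∈ X, IsFactorZ x w) →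
      ∃ N : ℕ, ∀ y ∈ X, ∀ i : ℤ, ∃ j : ℤ, i ≤ j ∧ j < i + (N : ℤ) ∧ occursAt y w j :=
    fun w hw => exists_window' hX w (lang' hX w hw)
  choose! f hf using hperw
  have hWfin : {w : List A | w.length ≤ L ∧ ∃ x ∈ X, IsFactorZ x w}.Finite :=
    (List.finite_length_le A L).subset fun w hw => hw.1
  refine ⟨hWfin.toFinset.sup f + 1, ?_⟩
  intro yy hy w hwL hwf i
  have hwW : w ∈ hWfin.toFinset := hWfin.mem_toFinset.mpr ⟨hwL, yy, hy, hwf⟩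
  obtain ⟨j, h1, h2, h3⟩ := hf w ⟨yy, hy, hwf⟩ yy hy i
  have hle : f w ≤ hWfin.toFinset.sup f + 1 := le_trans (Finset.le_sup hwW) (Nat.le_succ _)
  exact ⟨j, h1, by omega, h3⟩

end AttractorHelpers

/-- Every minimal shift space has arbitrarily sparse string attractors. -/
theorem minimal_shift_sparse_attractor {A : Type*} [Fintype A] (X : Set (ℤ → A))
    (hX : MinimalShift X) (η : ℕ → ℕ) (hmono : Monotone η)
    (htend : Filter.Tendsto η Filter.atTop Filter.atTop) :
    ∃ Γ : Set ℤ, IsAttractorX X Γ ∧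
      ∀ n : ℕ, (Γ ∩ Set.Icc (-(n : ℤ)) (n : ℤ)).ncard ≤ η n := by
  classical
  by_cases hne : X.Nonempty
  swap
  · refine ⟨∅, fun x hx => absurd ⟨x, hx⟩ hne, fun n => by simp⟩
  choose R hR using fun L => exists_windowAll' hX L
  have hg : ∀ m : ℕ, ∃ n₀ : ℕ, ∀ n ≥ n₀, m ≤ η n :=
    fun m => Filter.eventually_atTop.mp (Filter.tendsto_atTop.mp htend m)
  choose g hgspec using hg
  set Ssum : ℕ → ℕ := fun k => ∑ j ∈ Finset.range (k + 1), R (j + 1) with hSsum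
  set q : ℕ → ℕ := fun k =>
    Nat.rec (max (g (Ssum 0)) 1) (fun k ih => max (g (Ssum (k + 1))) (ih + 1)) k with hqdef
  have hq0 : q 0 = max (g (Ssum 0)) 1 := rfl
  have hqs : ∀ k, q (k + 1) = max (g (Ssum (k + 1))) (q k + 1) := fun k => rfl
  have hqg : ∀ k, g (Ssum k) ≤ q k := by
    intro k
    cases k with
    | zero => rw [hq0]; exact le_max_left _ _
    | succ k => rw [hqs]; exact le_max_left _ _
  have hq1 : ∀ k, Ssum k ≤ η (q k) := fun k => hgspec (Ssum k) (q k) (hqg k)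
  have hq2 : ∀ k, k < q k := by
    intro k
    induction k with
    | zero => rw [hq0]; omega
    | succ k ih => rw [hqs]; omega
  refine ⟨⋃ k : ℕ, Set.Ico ((q k : ℤ)) ((q k : ℤ) + (R (k + 1) : ℤ)), ?_, ?_⟩
  · -- attractor
    intro x hx w hwne hwf
    obtain ⟨ℓ, hℓ⟩ : ∃ ℓ : ℕ, w.length = ℓ + 1 := by
      cases w with
      | nil => exact absurd rfl hwne
      | cons a t => exact ⟨t.length, by simp⟩
    obtain ⟨j, h1, h2, h3⟩ := hR w.length x hx w le_rfl hwf ((q ℓ : ℤ))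
    refine ⟨j, h3, j, ?_, le_refl j, by omega⟩
    refine Set.mem_iUnion.mpr ⟨ℓ, Set.mem_Ico.mpr ⟨h1, ?_⟩⟩
    rw [hℓ] at h2
    exact h2
  · -- sparsity
    intro n
    set F : Finset ℕ := (Finset.range (n + 1)).filter (fun k => q k ≤ n) with hF
    set B : Finset ℤ :=
      F.biUnion (fun k => Finset.Ico ((q k : ℤ)) ((q k : ℤ) + (R (k + 1) : ℤ))) with hB
    have hsub : (⋃ k : ℕ, Set.Ico ((q k : ℤ)) ((q k : ℤ) + (R (k + 1) : ℤ)))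
        ∩ Set.Icc (-(n : ℤ)) (n : ℤ) ⊆ ↑B := by
      rintro m ⟨hmΓ, hm1, hm2⟩
      obtain ⟨k, hk⟩ := Set.mem_iUnion.mp hmΓ
      rw [Set.mem_Ico] at hk
      have hqk : q k ≤ n := by omega
      have hkn : k < n + 1 := by have := hq2 k; omega
      simp only [hB, Finset.coe_biUnion, Set.mem_iUnion, Finset.mem_coe, Finset.mem_Ico,
        hF, Finset.mem_filter, Finset.mem_range]
      exact ⟨k, ⟨hkn, hqk⟩, hk.1, hk.2⟩
    have hcard : ((⋃ k : ℕ, Set.Ico ((q k : ℤ)) ((q k : ℤ) + (R (k + 1) : ℤ)))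
        ∩ Set.Icc (-(n : ℤ)) (n : ℤ)).ncard ≤ B.card := by
      have h := Set.ncard_le_ncard hsub B.finite_toSet
      rwa [Set.ncard_coe_finset] at h
    by_cases hFe : F.Nonempty
    · set K := F.max' hFe with hK
      have hKF : K ∈ F := F.max'_mem hFe
      have h1 : B.card ≤ ∑ k ∈ F, R (k + 1) := by
        refine le_trans Finset.card_biUnion_le (Finset.sum_le_sum fun k _ => ?_)
        rw [Int.card_Ico]
        omega
      have h2 : ∑ k ∈ F, R (k + 1) ≤ Ssum K := by
        rw [hSsum]
        refine Finset.sum_le_sum_of_subset fun k hk => ?_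
        exact Finset.mem_range.mpr (Nat.lt_succ_of_le (F.le_max' k hk))
      have h3 : Ssum K ≤ η (q K) := hq1 K
      have h4 : η (q K) ≤ η n := hmono (Finset.mem_filter.mp hKF).2
      omega
    · have hBe : B = ∅ := by
        rw [hB, Finset.not_nonempty_iff_eq_empty.mp hFe]
        simp
      rw [hBe] at hcard
      simpa using le_trans hcard (Nat.zero_le _)
end
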